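/- Let K be a local field and n a positive integer with char(K) ∤ n. Let f be a complex-valued function defined on the complement of a finite subset of ℙ¹(K) such that for every t₀ ∈ ℙ¹(K) there is a punctured neighbourhood U_{t₀} of t₀ on which the value of f(t) depends only on (t − t₀) mod (K^*)^n (with 1/t in place of t − t₀ when t₀ = ∞). Then f is locally constant outside a finite subset of ℙ¹(K): there is a finite set Σ ⊂ ℙ¹(K) such that every t₁ ∈ ℙ¹(K) ∖ Σ has a neighbourhood on which f is defined and constant. -/

import Mathlib

/-- A (nonarchimedean) local field structure on a field `K`: a discrete valuation
`v : K → ℤ ∪ {⊤}` (with `v 0 = ⊤`), normalized so that `v (K^*) = ℤ`, with respect to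
which `K` is complete, and whose residue field is finite. -/
structure IsLocalField {K : Type*} [Field K] (v : K → WithTop ℤ) : Prop where
  map_zero : v 0 = ⊤
  ne_top : ∀ x : K, x ≠ 0 → v x ≠ ⊤
  map_mul : ∀ x y : K, v (x * y) = v x + v y
  min_le_add : ∀ x y : K, min (v x) (v y) ≤ v (x + y)
  exists_eq : ∀ k : ℤ, ∃ x : K, v x = (k : WithTop ℤ)
  complete : ∀ a : ℕ → K,
      (∀ k : ℤ, ∃ N : ℕ, ∀ m m' : ℕ, N ≤ m → N ≤ m' → (k : WithTop ℤ) ≤ v (a m - a m')) →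
      ∃ L : K, ∀ k : ℤ, ∃ N : ℕ, ∀ m : ℕ, N ≤ m → (k : WithTop ℤ) ≤ v (a m - L)
  finite_residue : ∃ T : Finset K, ∀ x : K, 0 ≤ v x → ∃ t ∈ T, (1 : WithTop ℤ) ≤ v (x - t)


namespace LFaux
variable {K : Type*} [Field K] {v : K → WithTop ℤ} (hK : IsLocalField v)
include hK

lemma exists_int (x : K) (hx : x ≠ 0) : ∃ z : ℤ, v x = (z : WithTop ℤ) := by
  have := hK.ne_top x hx
  cases h : v x with
  | top => exact absurd h this
  | coe z => exact ⟨z, rfl⟩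

lemma v_one : v 1 = 0 := by
  obtain ⟨z, hz⟩ := exists_int hK (1 : K) one_ne_zero
  have h := hK.map_mul 1 1
  rw [one_mul, hz] at h
  have : z = z + z := by exact_mod_cast h
  have : z = 0 := by omega
  rw [hz, this]; rfl

lemma v_neg (x : K) : v (-x) = v x := by
  have hm1 : v (-1 : K) = 0 := by
    obtain ⟨z, hz⟩ := exists_int hK (-1 : K) (by norm_num)
    have h := hK.map_mul (-1) (-1)
    rw [neg_mul_neg, one_mul, v_one hK, hz] at h
    have : (0 : ℤ) = z + z := by exact_mod_cast h
    have : z = 0 := by omega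
    rw [hz, this]; rfl
  have := hK.map_mul (-1) x
  rw [neg_one_mul, hm1, zero_add] at this
  exact this

lemma v_sub_comm (x y : K) : v (x - y) = v (y - x) := by
  rw [← v_neg hK (x - y), neg_sub]

lemma min_le_sub (x y : K) : min (v x) (v y) ≤ v (x - y) := by
  have h := hK.min_le_add x (-y)
  rw [v_neg hK] at h
  rwa [sub_eq_add_neg]

/-- ultrametric triangle for three points -/
lemma tri (k : WithTop ℤ) {x y z : K} (h1 : k ≤ v (x - y)) (h2 : k ≤ v (y - z)) :
    k ≤ v (x - z) := by
  have : x - z = (x - y) + (y - z) := by ring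
  rw [this]
  exact le_trans (le_min h1 h2) (hK.min_le_add _ _)

/-- if v x = d and v y > d then v (x + y) = d -/
lemma v_add_eq {x y : K} {d : ℤ} (hx : v x = (d : WithTop ℤ))
    (hy : ((d + 1 : ℤ) : WithTop ℤ) ≤ v y) : v (x + y) = (d : WithTop ℤ) := by
  have hle : (d : WithTop ℤ) ≤ v (x + y) := by
    refine le_trans ?_ (hK.min_le_add x y)
    refine le_min (le_of_eq hx.symm) (le_trans ?_ hy)
    exact_mod_cast (by omega : d ≤ d + 1)
  have hge : v (x + y) ≤ (d : WithTop ℤ) := by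
    by_contra hcon
    push_neg at hcon
    have h2 : ((d + 1 : ℤ) : WithTop ℤ) ≤ v (x + y) := by
      cases h : v (x + y) with
      | top => exact le_top
      | coe z =>
        rw [h] at hcon
        exact_mod_cast (by exact_mod_cast hcon : d < z)
    have : ((d+1 : ℤ) : WithTop ℤ) ≤ v x := by
      have hxe : x = (x + y) + (-y) := by ring
      rw [hxe]
      refine le_trans (le_min h2 ?_) (hK.min_le_add _ _)
      rwa [v_neg hK]
    rw [hx] at this
    exact absurd (by exact_mod_cast this : d + 1 ≤ d) (by omega)
  exact le_antisymm hge hle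

lemma v_nat (m : ℕ) : (0 : WithTop ℤ) ≤ v (m : K) := by
  induction m with
  | zero => simp [hK.map_zero]
  | succ k ih =>
    push_cast
    refine le_trans (le_min ih ?_) (hK.min_le_add _ _)
    rw [v_one hK]

lemma v_mul_nonneg {x y : K} (hx : 0 ≤ v x) (hy : 0 ≤ v y) : 0 ≤ v (x * y) := by
  rw [hK.map_mul]
  simpa using add_le_add hx hy

lemma v_pow_nonneg {x : K} (hx : 0 ≤ v x) (m : ℕ) : 0 ≤ v (x ^ m) := by
  induction m with
  | zero => simp [pow_zero, v_one hK]
  | succ k ih => rw [pow_succ]; exact v_mul_nonneg hK ih hx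

lemma v_pow_zero {x : K} (hx : v x = 0) (m : ℕ) : v (x ^ m) = 0 := by
  induction m with
  | zero => simp [pow_zero, v_one hK]
  | succ k ih => rw [pow_succ, hK.map_mul, ih, hx, add_zero]

lemma v_add_nonneg {x y : K} (hx : 0 ≤ v x) (hy : 0 ≤ v y) : 0 ≤ v (x + y) :=
  le_trans (le_min hx hy) (hK.min_le_add x y)

lemma v_inv {x : K} {d : ℤ} (hx : x ≠ 0) (hd : v x = (d : WithTop ℤ)) :
    v x⁻¹ = ((-d : ℤ) : WithTop ℤ) := by
  have h := hK.map_mul x x⁻¹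
  rw [mul_inv_cancel₀ hx, v_one hK, hd] at h
  obtain ⟨z, hz⟩ := exists_int hK x⁻¹ (inv_ne_zero hx)
  rw [hz] at h ⊢
  have : (0:ℤ) = d + z := by exact_mod_cast h
  have : z = -d := by omega
  rw [this]

lemma eq_zero_of_all_le {y : K} (h : ∀ k : ℤ, (k : WithTop ℤ) ≤ v y) : y = 0 := by
  by_contra hy
  obtain ⟨z, hz⟩ := exists_int hK y hy
  have := h (z + 1)
  rw [hz] at this
  exact absurd (by exact_mod_cast this : z + 1 ≤ z) (by omega)

omit [Field K] hK in
lemma cancel_right {a : WithTop ℤ} {b c : ℤ} (h : (b : WithTop ℤ) ≤ a + (c : WithTop ℤ)) :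
    ((b - c : ℤ) : WithTop ℤ) ≤ a := by
  cases a with
  | top => exact le_top
  | coe z =>
    have : b ≤ z + c := by exact_mod_cast h
    exact_mod_cast (by omega : b - c ≤ z)


/-- binomial expansion with remainder having nonneg valuation -/
lemma binom (b h : K) (hb : 0 ≤ v b) (hh : 0 ≤ v h) (m : ℕ) :
    ∃ r : K, (b + h) ^ (m + 1)
      = b ^ (m + 1) + ((m + 1 : ℕ) : K) * b ^ m * h + h ^ 2 * r ∧ 0 ≤ v r := by
  induction m with
  | zero =>
    refine ⟨0, by push_cast; ring, ?_⟩
    rw [hK.map_zero]; exact le_top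
  | succ m ih =>
    obtain ⟨r, hr, hvr⟩ := ih
    refine ⟨b * r + ((m + 1 : ℕ) : K) * b ^ m + h * r, ?_, ?_⟩
    · rw [pow_succ, hr]; push_cast; ring
    · refine v_add_nonneg hK (v_add_nonneg hK ?_ ?_) ?_
      · exact v_mul_nonneg hK hb hvr
      · exact v_mul_nonneg hK (v_nat hK _) (v_pow_nonneg hK hb m)
      · exact v_mul_nonneg hK hh hvr

/-- x^m - y^m factors with cofactor of nonneg valuation -/
lemma pow_sub_pow (x y : K) (hx : 0 ≤ v x) (hy : 0 ≤ v y) (m : ℕ) :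
    ∃ g : K, x ^ m - y ^ m = (x - y) * g ∧ 0 ≤ v g := by
  induction m with
  | zero => exact ⟨0, by ring, by rw [hK.map_zero]; exact le_top⟩
  | succ m ih =>
    obtain ⟨g, hg, hvg⟩ := ih
    refine ⟨x * g + y ^ m, ?_, v_add_nonneg hK (v_mul_nonneg hK hx hvg) (v_pow_nonneg hK hy m)⟩
    have : x ^ (m + 1) - y ^ (m + 1) = x * (x ^ m - y ^ m) + (x - y) * y ^ m := by ring
    rw [this, hg]; ring


omit [Field K] hK in
lemma coe_mono {p q : ℤ} (h : p ≤ q) : (p : WithTop ℤ) ≤ (q : WithTop ℤ) := by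
  exact_mod_cast h

lemma ne_zero_of_ne_top {x : K} (h : v x ≠ ⊤) : x ≠ 0 := by
  intro hx; rw [hx, hK.map_zero] at h; exact h rfl

lemma hensel (n : ℕ) (hn : 0 < n) (hnK : (n : K) ≠ 0) :
    ∃ k₀ : ℤ, 0 ≤ k₀ ∧ ∀ u : K, (k₀ : WithTop ℤ) ≤ v (u - 1) →
      ∃ s : K, s ≠ 0 ∧ u = s ^ n := by
  obtain ⟨c, hc⟩ := exists_int hK ((n : K)) hnK
  have hc0 : 0 ≤ c := by
    have := v_nat hK (K := K) n
    rw [hc] at this; exact_mod_cast this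
  refine ⟨2 * c + 1, by omega, ?_⟩
  intro u hu
  -- Newton iteration
  set a : ℕ → K := fun j =>
    Nat.rec (1 : K) (fun _ prev => prev - (prev ^ n - u) * (((n : K)) * prev ^ (n - 1))⁻¹) j
    with ha_def
  have ha : ∀ j, a (j + 1) = a j - (a j ^ n - u) * (((n : K)) * a j ^ (n - 1))⁻¹ :=
    fun j => rfl
  have ha0 : a 0 = 1 := rfl
  -- Invariant
  have inv : ∀ j : ℕ, ((c + 1 : ℤ) : WithTop ℤ) ≤ v (a j - 1) ∧
      ((2 * c + 1 + j : ℤ) : WithTop ℤ) ≤ v (a j ^ n - u) := by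
    intro j
    induction j with
    | zero =>
      constructor
      · rw [ha0, sub_self, hK.map_zero]; exact le_top
      · rw [ha0, one_pow]
        have h1 : (1 : K) - u = -(u - 1) := by ring
        rw [h1, v_neg hK]
        exact le_trans (coe_mono (by omega)) hu
    | succ j ih =>
      obtain ⟨ih1, ih2⟩ := ih
      set b := a j with hb_def
      have hvb : v b = 0 := by
        have hb : b = 1 + (b - 1) := by ring
        rw [hb]
        exact v_add_eq hK (by rw [v_one hK]; rfl)
          (le_trans (coe_mono (by omega : (0:ℤ) + 1 ≤ c + 1)) ih1)
      set D : K := (n : K) * b ^ (n - 1) with hD_def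
      have hvD : v D = (c : WithTop ℤ) := by
        rw [hD_def, hK.map_mul, v_pow_zero hK hvb, hc, add_zero]
      have hDne : D ≠ 0 := ne_zero_of_ne_top hK (by rw [hvD]; exact WithTop.coe_ne_top)
      set e : K := b ^ n - u with he_def
      set h : K := -(e * D⁻¹) with hh_def
      have hhD : h * D = -e := by
        rw [hh_def]; field_simp
      have hvh : ((c + 1 + j : ℤ) : WithTop ℤ) ≤ v h := by
        have h1 : v (h * D) = v h + (c : WithTop ℤ) := by rw [hK.map_mul, hvD]
        have h2 : ((2 * c + 1 + j : ℤ) : WithTop ℤ) ≤ v h + (c : WithTop ℤ) := by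
          rw [← h1, hhD, v_neg hK]; exact ih2
        have := cancel_right h2
        refine le_trans (coe_mono (by omega)) this
      have hstep : a (j + 1) = b + h := by
        rw [ha j, hh_def, he_def, hD_def, hb_def]; ring
      constructor
      · have : a (j + 1) - 1 = (b - 1) + h := by rw [hstep]; ring
        rw [this]
        refine le_trans (le_min ih1 (le_trans (coe_mono (by omega)) hvh)) (hK.min_le_add _ _)
      · obtain ⟨m, hm⟩ : ∃ m, n = m + 1 := ⟨n - 1, by omega⟩
        have hn1 : n - 1 = m := by omega
        have hvh0 : 0 ≤ v h := le_trans (coe_mono (by omega)) hvh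
        obtain ⟨r, hr, hvr⟩ := binom hK b h (by rw [hvb]) hvh0 m
        have hDm : D = ((m + 1 : ℕ) : K) * b ^ m := by rw [hD_def, hn1, hm]
        have hDh : ((m + 1 : ℕ) : K) * b ^ m * h = -e := by
          rw [← hDm, mul_comm]; exact hhD
        have hkey : a (j + 1) ^ n - u = h ^ 2 * r :=
          calc a (j + 1) ^ n - u = (b + h) ^ (m + 1) - u := by rw [hstep, hm]
            _ = b ^ (m + 1) + (-e) + h ^ 2 * r - u := by rw [hr, hDh]
            _ = h ^ 2 * r := by rw [he_def, hm]; ring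
        rw [hkey]
        have hv2 : v (h ^ 2 * r) = v h + (v h + v r) := by
          rw [hK.map_mul, pow_two, hK.map_mul, add_assoc]
        rw [hv2]
        have hsum : ((c + 1 + (j:ℤ) : ℤ) : WithTop ℤ) + (((c + 1 + (j:ℤ) : ℤ) : WithTop ℤ) + 0)
            = ((2*c + 2 + 2*(j:ℤ) : ℤ) : WithTop ℤ) := by
          rw [add_zero, ← WithTop.coe_add]
          exact congrArg (fun z : ℤ => (z : WithTop ℤ)) (by ring)
        calc ((2 * c + 1 + ((j+1:ℕ):ℤ) : ℤ) : WithTop ℤ)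
            ≤ ((2*c + 2 + 2*(j:ℤ) : ℤ) : WithTop ℤ) := coe_mono (by push_cast; omega)
          _ = ((c + 1 + (j:ℤ) : ℤ) : WithTop ℤ) + (((c + 1 + (j:ℤ) : ℤ) : WithTop ℤ) + 0) := hsum.symm
          _ ≤ v h + (v h + v r) := add_le_add hvh (add_le_add hvh hvr)
  have hvam : ∀ m, v (a m) = 0 := by
    intro m
    have h1 := (inv m).1
    have h2 : a m = 1 + (a m - 1) := by ring
    rw [h2]
    exact v_add_eq hK (by rw [v_one hK]; rfl)
      (le_trans (coe_mono (by omega : (0:ℤ) + 1 ≤ c + 1)) h1)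
  -- Cauchy
  have hdiff : ∀ j : ℕ, ((c + 1 + j : ℤ) : WithTop ℤ) ≤ v (a (j + 1) - a j) := by
    intro j
    have ih2 := (inv j).2
    have hvD : v ((n : K) * a j ^ (n - 1)) = (c : WithTop ℤ) := by
      rw [hK.map_mul, v_pow_zero hK (hvam j), hc, add_zero]
    have hDne : ((n : K) * a j ^ (n - 1)) ≠ 0 :=
      ne_zero_of_ne_top hK (by rw [hvD]; exact WithTop.coe_ne_top)
    have hprod : (a (j + 1) - a j) * ((n : K) * a j ^ (n - 1)) = -(a j ^ n - u) := by
      rw [ha j, sub_sub_cancel_left, neg_mul, mul_assoc, inv_mul_cancel₀ hDne, mul_one]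
    have h2 : ((2 * c + 1 + (j:ℤ) : ℤ) : WithTop ℤ) ≤ v (a (j + 1) - a j) + (c : WithTop ℤ) := by
      rw [← hvD, ← hK.map_mul, hprod, v_neg hK]; exact ih2
    exact le_trans (coe_mono (by omega)) (cancel_right h2)
  have htel : ∀ d p : ℕ, ((c + 1 + p : ℤ) : WithTop ℤ) ≤ v (a (p + d) - a p) := by
    intro d
    induction d with
    | zero => intro p; simp [hK.map_zero]
    | succ d ihd =>
      intro p
      have h1 := hdiff (p + d)
      have : a (p + (d + 1)) - a p = (a (p + d + 1) - a (p + d)) + (a (p + d) - a p) := by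
        have : p + (d + 1) = p + d + 1 := by omega
        rw [this]; ring
      rw [this]
      refine le_trans (le_min (le_trans (coe_mono (by push_cast; omega)) h1) (ihd p))
        (hK.min_le_add _ _)
  obtain ⟨L, hL⟩ := hK.complete a (by
    intro k
    refine ⟨(k - c - 1).toNat, ?_⟩
    have hN : (k - c - 1 : ℤ) ≤ ((k - c - 1).toNat : ℤ) := Int.self_le_toNat _
    intro m m' hm hm'
    rcases le_total m' m with hle | hle
    · obtain ⟨d, rfl⟩ : ∃ d, m = m' + d := ⟨m - m', by omega⟩
      refine le_trans (coe_mono ?_) (htel d m')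
      have : (k - c - 1 : ℤ) ≤ (m' : ℤ) := le_trans hN (by exact_mod_cast hm')
      omega
    · obtain ⟨d, rfl⟩ : ∃ d, m' = m + d := ⟨m' - m, by omega⟩
      rw [v_sub_comm hK]
      refine le_trans (coe_mono ?_) (htel d m)
      have : (k - c - 1 : ℤ) ≤ (m : ℤ) := le_trans hN (by exact_mod_cast hm)
      omega)
  have hvL : v L = 0 := by
    obtain ⟨N, hN⟩ := hL 1
    have h1 := hN N le_rfl
    have : L = a N + (-(a N - L)) := by ring
    rw [this]
    exact v_add_eq hK (hvam N) (by rw [v_neg hK]; exact h1)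
  have hLne : L ≠ 0 := ne_zero_of_ne_top hK (by rw [hvL]; exact WithTop.coe_ne_top)
  refine ⟨L, hLne, ?_⟩
  have h0 : u - L ^ n = 0 := by
    apply eq_zero_of_all_le hK
    intro k
    obtain ⟨N, hN⟩ := hL k
    set m := max N (k - (2 * c + 1)).toNat with hm_def
    have hNm : N ≤ m := le_max_left _ _
    have h1 : (k : WithTop ℤ) ≤ v (a m ^ n - u) := by
      refine le_trans (coe_mono ?_) (inv m).2
      have : (k - (2*c+1) : ℤ) ≤ ((k - (2*c+1)).toNat : ℤ) := Int.self_le_toNat _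
      have h2 : ((k - (2*c+1)).toNat : ℤ) ≤ (m : ℤ) := by exact_mod_cast le_max_right _ _
      omega
    obtain ⟨g, hg, hvg⟩ := pow_sub_pow hK (a m) L (by rw [hvam m]) (by rw [hvL]) n
    have h2 : (k : WithTop ℤ) ≤ v (a m ^ n - L ^ n) := by
      rw [hg, hK.map_mul]
      calc (k : WithTop ℤ) = (k : WithTop ℤ) + 0 := by rw [add_zero]
        _ ≤ v (a m - L) + v g := add_le_add (hN m hNm) hvg
    have : u - L ^ n = -(a m ^ n - u) + (a m ^ n - L ^ n) := by ring
    rw [this]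
    refine le_trans (le_min (by rwa [v_neg hK]) h2) (hK.min_le_add _ _)
  exact (sub_eq_zero.mp h0).symm ▸ rfl

open Classical in
lemma subdiv (a : K) (m : ℤ) :
    ∃ T' : Finset K, (∀ t ∈ T', (m : WithTop ℤ) ≤ v (t - a)) ∧
      ∀ x : K, (m : WithTop ℤ) ≤ v (x - a) →
        ∃ t ∈ T', ((m + 1 : ℤ) : WithTop ℤ) ≤ v (x - t) := by
  obtain ⟨p, hp⟩ := hK.exists_eq m
  have hpne : p ≠ 0 := ne_zero_of_ne_top hK (by rw [hp]; exact WithTop.coe_ne_top)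
  obtain ⟨T, hT⟩ := hK.finite_residue
  set C : K → Prop := fun t => ∃ y : K, (m : WithTop ℤ) ≤ v (y - a) ∧
      ((m + 1 : ℤ) : WithTop ℤ) ≤ v (y - (a + p * t)) with hC_def
  set g : K → K := fun t => if hex : C t then hex.choose else a with hg_def
  refine ⟨T.image g, ?_, ?_⟩
  · intro t' ht'
    obtain ⟨t, _, rfl⟩ := Finset.mem_image.mp ht'
    by_cases hex : C t
    · have : g t = hex.choose := by rw [hg_def]; exact dif_pos hex
      rw [this]; exact hex.choose_spec.1
    · have : g t = a := by rw [hg_def]; exact dif_neg hex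
      rw [this, sub_self, hK.map_zero]; exact le_top
  · intro x hx
    have hy0 : 0 ≤ v ((x - a) * p⁻¹) := by
      rw [hK.map_mul, v_inv hK hpne hp]
      have h1 : (m : WithTop ℤ) + ((-m : ℤ) : WithTop ℤ) ≤ v (x - a) + ((-m : ℤ) : WithTop ℤ) :=
        add_le_add hx le_rfl
      have h2 : (m : WithTop ℤ) + ((-m : ℤ) : WithTop ℤ) = 0 := by
        rw [← WithTop.coe_add]
        exact congrArg (fun z : ℤ => (z : WithTop ℤ)) (by ring)
      rwa [h2] at h1
    obtain ⟨t, ht, h1⟩ := hT _ hy0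
    have hxt : ((m + 1 : ℤ) : WithTop ℤ) ≤ v (x - (a + p * t)) := by
      have he : x - (a + p * t) = p * ((x - a) * p⁻¹ - t) := by field_simp; ring
      rw [he, hK.map_mul, hp]
      calc ((m + 1 : ℤ) : WithTop ℤ) = (m : WithTop ℤ) + ((1 : ℤ) : WithTop ℤ) := by
            rw [← WithTop.coe_add]
        _ ≤ (m : WithTop ℤ) + v ((x - a) * p⁻¹ - t) := add_le_add le_rfl (by exact_mod_cast h1)
    have hex : C t := ⟨x, hx, hxt⟩
    refine ⟨g t, Finset.mem_image_of_mem g ht, ?_⟩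
    have hgt : g t = hex.choose := by rw [hg_def]; exact dif_pos hex
    obtain ⟨hy1, hy2⟩ := hex.choose_spec
    rw [hgt]
    exact tri hK _ hxt (by rw [v_sub_comm hK]; exact hy2)

lemma cover (kf : K → ℤ) (c : ℤ) :
    ∃ F : Finset K, ∀ x : K, (c : WithTop ℤ) ≤ v x →
      ∃ t₀ ∈ F, ((kf t₀ : ℤ) : WithTop ℤ) ≤ v (x - t₀) := by
  classical
  set P : K → ℤ → Prop := fun a m => ∃ F : Finset K, ∀ x : K,
      (m : WithTop ℤ) ≤ v (x - a) → ∃ t₀ ∈ F, ((kf t₀ : ℤ) : WithTop ℤ) ≤ v (x - t₀)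
    with hP_def
  by_contra hcon
  have hbad0 : ¬ P 0 c := by
    intro hP
    obtain ⟨F, hF⟩ := hP
    exact hcon ⟨F, fun x hx => hF x (by rwa [sub_zero])⟩
  have step : ∀ (a : K) (m : ℤ), ¬ P a m →
      ∃ a', (m : WithTop ℤ) ≤ v (a' - a) ∧ ¬ P a' (m + 1) := by
    intro a m hbad
    by_contra hcon2
    push_neg at hcon2
    have h' : ∀ t : K, ∃ F : Finset K, (m : WithTop ℤ) ≤ v (t - a) →
        ∀ x : K, ((m + 1 : ℤ) : WithTop ℤ) ≤ v (x - t) →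
          ∃ t₀ ∈ F, ((kf t₀ : ℤ) : WithTop ℤ) ≤ v (x - t₀) := by
      intro t
      by_cases hc : (m : WithTop ℤ) ≤ v (t - a)
      · obtain ⟨F, hF⟩ := hcon2 t hc
        exact ⟨F, fun _ x hx => hF x hx⟩
      · exact ⟨∅, fun hc' => absurd hc' hc⟩
    choose G hG using h'
    obtain ⟨T', hT1, hT2⟩ := subdiv hK a m
    refine hbad ⟨T'.biUnion G, ?_⟩
    intro x hx
    obtain ⟨t, ht, hxt⟩ := hT2 x hx
    obtain ⟨t₀, ht₀, hle⟩ := hG t (hT1 t ht) x hxt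
    exact ⟨t₀, Finset.mem_biUnion.mpr ⟨t, ht, ht₀⟩, hle⟩
  -- build bad sequence
  let D : ℕ → Type _ := fun j => {q : K // ¬ P q (c + j)}
  have hbad0' : ¬ P 0 (c + ((0 : ℕ) : ℤ)) := by simpa using hbad0
  have hconv : ∀ (q : K) (j : ℕ), ¬ P q (c + (j : ℤ) + 1) → ¬ P q (c + ((j + 1 : ℕ) : ℤ)) := by
    intro q j h
    have he : c + ((j + 1 : ℕ) : ℤ) = c + (j : ℤ) + 1 := by push_cast; ring
    rwa [he]
  let next : ∀ j : ℕ, D j → D (j + 1) := fun j d =>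
    ⟨(step d.1 (c + j) d.2).choose, hconv _ j (step d.1 (c + j) d.2).choose_spec.2⟩
  let A : ∀ j : ℕ, D j := fun j => Nat.rec ⟨0, hbad0'⟩ next j
  set aseq : ℕ → K := fun j => (A j).1 with haseq
  have hstep' : ∀ j : ℕ, ((c + j : ℤ) : WithTop ℤ) ≤ v (aseq (j + 1) - aseq j) := by
    intro j
    exact (step (A j).1 (c + j) (A j).2).choose_spec.1
  have htel : ∀ d q : ℕ, ((c + q : ℤ) : WithTop ℤ) ≤ v (aseq (q + d) - aseq q) := by
    intro d
    induction d with
    | zero => intro q; simp [hK.map_zero]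
    | succ d ihd =>
      intro q
      have h1 := hstep' (q + d)
      have he : aseq (q + (d + 1)) - aseq q
          = (aseq (q + d + 1) - aseq (q + d)) + (aseq (q + d) - aseq q) := by
        have : q + (d + 1) = q + d + 1 := by omega
        rw [this]; ring
      rw [he]
      refine le_trans (le_min (le_trans (coe_mono (by push_cast; omega)) h1) (ihd q))
        (hK.min_le_add _ _)
  obtain ⟨L, hL⟩ := hK.complete aseq (by
    intro k
    refine ⟨(k - c).toNat, ?_⟩
    have hN : (k - c : ℤ) ≤ ((k - c).toNat : ℤ) := Int.self_le_toNat _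
    intro m m' hm hm'
    rcases le_total m' m with hle | hle
    · obtain ⟨d, rfl⟩ : ∃ d, m = m' + d := ⟨m - m', by omega⟩
      refine le_trans (coe_mono ?_) (htel d m')
      have : (k - c : ℤ) ≤ (m' : ℤ) := le_trans hN (by exact_mod_cast hm')
      omega
    · obtain ⟨d, rfl⟩ : ∃ d, m' = m + d := ⟨m' - m, by omega⟩
      rw [v_sub_comm hK]
      refine le_trans (coe_mono ?_) (htel d m)
      have : (k - c : ℤ) ≤ (m : ℤ) := le_trans hN (by exact_mod_cast hm)
      omega)
  set j : ℕ := (kf L - c).toNat with hj_def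
  have hcj : kf L ≤ c + (j : ℤ) := by
    have := Int.self_le_toNat (kf L - c)
    omega
  obtain ⟨N, hN⟩ := hL (c + j)
  set m := max N j with hm_def
  have h1 : ((c + j : ℤ) : WithTop ℤ) ≤ v (aseq m - L) := hN m (le_max_left _ _)
  have h2 : ((c + j : ℤ) : WithTop ℤ) ≤ v (aseq m - aseq j) := by
    obtain ⟨d, hd⟩ : ∃ d, m = j + d := ⟨m - j, by omega⟩
    rw [hd]; exact htel d j
  have h3 : ((c + j : ℤ) : WithTop ℤ) ≤ v (aseq j - L) :=
    tri hK _ (by rw [v_sub_comm hK]; exact h2) h1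
  refine (A j).2 ⟨{L}, ?_⟩
  intro x hx
  refine ⟨L, Finset.mem_singleton_self L, ?_⟩
  refine le_trans (coe_mono hcj) (tri hK _ hx h3)

lemma avoidE (x : K) (s : Finset (Option K)) :
    ∃ kE : ℤ, ∀ t : K, t ≠ x → (kE : WithTop ℤ) ≤ v (t - x) → some t ∉ s := by
  classical
  induction s using Finset.induction_on with
  | empty => exact ⟨0, by simp⟩
  | @insert o s' ho ih =>
    obtain ⟨kE, hkE⟩ := ih
    match o with
    | none =>
      refine ⟨kE, fun t ht hle => ?_⟩
      rw [Finset.mem_insert]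
      push_neg
      exact ⟨by simp, hkE t ht hle⟩
    | some e =>
      by_cases hex : e = x
      · subst hex
        refine ⟨kE, fun t ht hle => ?_⟩
        rw [Finset.mem_insert]
        push_neg
        exact ⟨by simpa using ht, hkE t ht hle⟩
      · obtain ⟨d, hd⟩ := exists_int hK (e - x) (sub_ne_zero.mpr hex)
        refine ⟨max kE (d + 1), fun t ht hle => ?_⟩
        rw [Finset.mem_insert]
        push_neg
        constructor
        · intro heq
          have : t = e := by simpa using heq
          subst this
          rw [hd] at hle
          have : max kE (d + 1) ≤ d := by exact_mod_cast hle
          omega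
        · exact hkE t ht (le_trans (coe_mono (le_max_left _ _)) hle)

end LFaux

open LFaux

/-- Let `K` be a local field and `n` a positive integer with
`char K ∤ n`.  We identify `ℙ¹(K)` with `Option K`, `none` being the point `∞`.
Let `f` be a complex-valued function defined on the complement of a finite subset `E` of
`ℙ¹(K)` such that for every `t₀ ∈ ℙ¹(K)` there is a punctured neighbourhood of `t₀` on
which the value of `f(t)` depends only on `(t − t₀) mod (K^*)^n` (with `1/t` in place of
`t − t₀` when `t₀ = ∞`).  Then `f` is locally constant outside a finite subset of
`ℙ¹(K)`: there is a finite set `Σ ⊂ ℙ¹(K)` such that every `t₁ ∈ ℙ¹(K) ∖ Σ` has a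
neighbourhood on which `f` is defined and constant. -/
theorem stmt10 {K : Type*} [Field K] (v : K → WithTop ℤ) (hK : IsLocalField v)
    (n : ℕ) (hn : 0 < n) (hchar : ringChar K = 0 ∨ ¬ (ringChar K ∣ n))
    (f : Option K → ℂ) (E : Set (Option K)) (hE : E.Finite)
    (hloc : ∀ t₀ : K, ∃ k : ℤ, ∀ t₁ t₂ : K, t₁ ≠ t₀ → t₂ ≠ t₀ →
        (k : WithTop ℤ) ≤ v (t₁ - t₀) → (k : WithTop ℤ) ≤ v (t₂ - t₀) →
        some t₁ ∉ E → some t₂ ∉ E →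
        (∃ s : K, s ≠ 0 ∧ t₁ - t₀ = s ^ n * (t₂ - t₀)) → f (some t₁) = f (some t₂))
    (hlocInf : ∃ k : ℤ, ∀ t₁ t₂ : K, v t₁ ≤ (k : WithTop ℤ) → v t₂ ≤ (k : WithTop ℤ) →
        some t₁ ∉ E → some t₂ ∉ E →
        (∃ s : K, s ≠ 0 ∧ t₁⁻¹ = s ^ n * t₂⁻¹) → f (some t₁) = f (some t₂)) :
    ∃ Sig : Set (Option K), Sig.Finite ∧
      (∀ x : K, some x ∉ Sig → some x ∉ E ∧
        ∃ k : ℤ, ∀ t : K, (k : WithTop ℤ) ≤ v (t - x) →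
          some t ∉ E ∧ f (some t) = f (some x)) ∧
      ((none : Option K) ∉ Sig → (none : Option K) ∉ E ∧
        ∃ k : ℤ, ∀ t : K, v t ≤ (k : WithTop ℤ) →
          some t ∉ E ∧ f (some t) = f none) := by
  classical
  have hnK : (n : K) ≠ 0 := by
    intro h
    have hdvd : ringChar K ∣ n := (ringChar.spec K n).mp h
    rcases hchar with h0 | hnd
    · rw [h0] at hdvd
      exact absurd (zero_dvd_iff.mp hdvd) (by omega)
    · exact hnd hdvd
  obtain ⟨c0, hc00, hhensel⟩ := hensel hK n hn hnK
  choose kf hkf using hloc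
  obtain ⟨kinf, hkinf⟩ := hlocInf
  obtain ⟨F, hF⟩ := cover hK kf (kinf + 1)
  refine ⟨(E ∪ {(none : Option K)}) ∪ ↑(F.image (fun t : K => (some t : Option K))), ?_, ?_, ?_⟩
  · exact ((hE.union (Set.finite_singleton _)).union (Finset.finite_toSet _))
  · intro x hx
    simp only [Set.mem_union, Set.mem_singleton_iff, Finset.coe_image, Set.mem_image,
      Finset.mem_coe, not_or, not_exists] at hx
    obtain ⟨⟨hxE, -⟩, hxF⟩ := hx
    push_neg at hxF
    refine ⟨hxE, ?_⟩
    obtain ⟨kE, hkE⟩ := avoidE hK x hE.toFinset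
    have hkE' : ∀ t : K, t ≠ x → (kE : WithTop ℤ) ≤ v (t - x) → some t ∉ E := by
      intro t ht hle h
      exact hkE t ht hle (hE.mem_toFinset.mpr h)
    rcases le_or_gt (v x) ((kinf : ℤ) : WithTop ℤ) with hcase | hcase
    · -- near infinity
      have hx0 : x ≠ 0 := by
        intro h
        rw [h, hK.map_zero] at hcase
        simp at hcase
      obtain ⟨d, hd⟩ := exists_int hK x hx0
      refine ⟨max kE (max (d + 1) (d + c0)), fun t hle => ?_⟩
      by_cases ht : t = x
      · subst ht; exact ⟨hxE, rfl⟩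
      have htE : some t ∉ E :=
        hkE' t ht (le_trans (coe_mono (le_max_left _ _)) hle)
      have hd1 : ((d + 1 : ℤ) : WithTop ℤ) ≤ v (t - x) :=
        le_trans (coe_mono (le_trans (le_max_left _ _) (le_max_right _ _))) hle
      have hdc : ((d + c0 : ℤ) : WithTop ℤ) ≤ v (t - x) :=
        le_trans (coe_mono (le_trans (le_max_right _ _) (le_max_right _ _))) hle
      have hvt : v t = (d : WithTop ℤ) := by
        have he : t = x + (t - x) := by ring
        rw [he]
        exact v_add_eq hK hd hd1
      have ht0 : t ≠ 0 := ne_zero_of_ne_top hK (by rw [hvt]; exact WithTop.coe_ne_top)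
      -- Hensel on u = t / x
      have hu : ((c0 : ℤ) : WithTop ℤ) ≤ v (t * x⁻¹ - 1) := by
        have he : t * x⁻¹ - 1 = (t - x) * x⁻¹ := by field_simp
        rw [he, hK.map_mul, v_inv hK hx0 hd]
        have h1 : ((d + c0 : ℤ) : WithTop ℤ) + ((-d : ℤ) : WithTop ℤ)
            ≤ v (t - x) + ((-d : ℤ) : WithTop ℤ) := add_le_add hdc le_rfl
        have h2 : ((d + c0 : ℤ) : WithTop ℤ) + ((-d : ℤ) : WithTop ℤ)
            = ((c0 : ℤ) : WithTop ℤ) := by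
          rw [← WithTop.coe_add]
          exact congrArg (fun z : ℤ => (z : WithTop ℤ)) (by ring)
        rwa [h2] at h1
      obtain ⟨s₀, hs₀, hus⟩ := hhensel _ hu
      refine ⟨htE, hkinf t x ?_ hcase htE hxE ⟨s₀⁻¹, inv_ne_zero hs₀, ?_⟩⟩
      · rw [hvt, ← hd]; exact hcase
      · rw [inv_pow, ← hus]
        field_simp
    · -- interior case: use covering
      have hcx : ((kinf + 1 : ℤ) : WithTop ℤ) ≤ v x := by
        cases hvx : v x with
        | top => exact le_top
        | coe z =>
          rw [hvx] at hcase
          exact_mod_cast (by exact_mod_cast hcase : kinf < z)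
      obtain ⟨t₀, ht₀F, hxt₀⟩ := hF x hcx
      have hxne : x ≠ t₀ := by
        intro h
        exact hxF t₀ ht₀F (by rw [h])
      obtain ⟨d, hd⟩ := exists_int hK (x - t₀) (sub_ne_zero.mpr hxne)
      refine ⟨max kE (max (d + 1) (d + c0)), fun t hle => ?_⟩
      by_cases ht : t = x
      · subst ht; exact ⟨hxE, rfl⟩
      have htE : some t ∉ E :=
        hkE' t ht (le_trans (coe_mono (le_max_left _ _)) hle)
      have hd1 : ((d + 1 : ℤ) : WithTop ℤ) ≤ v (t - x) :=
        le_trans (coe_mono (le_trans (le_max_left _ _) (le_max_right _ _))) hle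
      have hdc : ((d + c0 : ℤ) : WithTop ℤ) ≤ v (t - x) :=
        le_trans (coe_mono (le_trans (le_max_right _ _) (le_max_right _ _))) hle
      have hvtt₀ : v (t - t₀) = (d : WithTop ℤ) := by
        have he : t - t₀ = (x - t₀) + (t - x) := by ring
        rw [he]
        exact v_add_eq hK hd hd1
      have htne : t ≠ t₀ := by
        intro h
        rw [h, sub_self, hK.map_zero] at hvtt₀
        exact WithTop.coe_ne_top hvtt₀.symm
      have hxt₀ne : x - t₀ ≠ 0 := sub_ne_zero.mpr hxne
      -- Hensel on u = (t - t₀)/(x - t₀)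
      have hu : ((c0 : ℤ) : WithTop ℤ) ≤ v ((t - t₀) * (x - t₀)⁻¹ - 1) := by
        have he : (t - t₀) * (x - t₀)⁻¹ - 1 = (t - x) * (x - t₀)⁻¹ := by
          field_simp; ring
        rw [he, hK.map_mul, v_inv hK hxt₀ne hd]
        have h1 : ((d + c0 : ℤ) : WithTop ℤ) + ((-d : ℤ) : WithTop ℤ)
            ≤ v (t - x) + ((-d : ℤ) : WithTop ℤ) := add_le_add hdc le_rfl
        have h2 : ((d + c0 : ℤ) : WithTop ℤ) + ((-d : ℤ) : WithTop ℤ)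
            = ((c0 : ℤ) : WithTop ℤ) := by
          rw [← WithTop.coe_add]
          exact congrArg (fun z : ℤ => (z : WithTop ℤ)) (by ring)
        rwa [h2] at h1
      obtain ⟨s₀, hs₀, hus⟩ := hhensel _ hu
      refine ⟨htE, hkf t₀ t x htne hxne ?_ hxt₀ htE hxE ⟨s₀, hs₀, ?_⟩⟩
      · rw [hvtt₀, ← hd]; exact hxt₀
      · rw [← hus]; field_simp
  · intro h
    exact absurd (Or.inl (Or.inr rfl)) h
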